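/- Let G be a locally indicable group with Hughes-free division ring D_FG and N ⊴ G a normal subgroup. Then the subring R of D_FG generated by D_FN and the image of FG is a crossed product D_FN * (G/N): R decomposes as a direct sum ⊕_{i} D_FN · φ(t_i) over a transversal {t_i} of N in G, making R a (G/N)-graded ring with a unit in each graded piece. -/

import Mathlib

/-- The division closure of a subset `s` of a division ring `D`: the smallest subring of
`D` containing `s` and closed under inverses. -/
def divClosure {D : Type*} [DivisionRing D] (s : Set D) : Subring D :=
  sInf {S : Subring D | s ⊆ S ∧ ∀ x ∈ S, x⁻¹ ∈ S}

/-- A group is locally indicable if every nontrivial finitely generated subgroup admits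
a surjection onto `ℤ`. -/
def LocallyIndicable (G : Type*) [Group G] : Prop :=
  ∀ H : Subgroup G, H ≠ ⊥ → H.FG →
    ∃ ψ : ↥H →* Multiplicative ℤ, Function.Surjective ψ

/-- The pair `(D, φ)` is a Hughes-free division ring of the group ring `FG`:
`D` is the division ring generated by `φ(FG)`, and for every nontrivial finitely
generated subgroup `H ≤ G`, every normal subgroup `N ⊴ H` with `H/N ≅ ℤ`, and all
`h₁, …, hₙ ∈ H` in pairwise distinct cosets of `N`, the sum
`⟨φ(FN)⟩ φ(h₁) + ⋯ + ⟨φ(FN)⟩ φ(hₙ)` is direct. -/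
def IsHughesFree {F G D : Type*} [DivisionRing F] [Group G] [DivisionRing D]
    (φ : MonoidAlgebra F G →+* D) : Prop :=
  divClosure (Set.range φ) = ⊤ ∧
  ∀ H : Subgroup G, H ≠ ⊥ → H.FG →
    ∀ N : Subgroup G, N ≤ H →
      (∃ ψ : ↥H →* Multiplicative ℤ, Function.Surjective ψ ∧
        ∀ x : ↥H, ψ x = 1 ↔ (x : G) ∈ N) →
      ∀ (n : ℕ) (h : Fin n → G), (∀ i, h i ∈ H) →
        (∀ i j, i ≠ j → (h i)⁻¹ * h j ∉ N) →
        ∀ α : Fin n → D,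
          (∀ i, α i ∈ divClosure
            (φ '' {p : MonoidAlgebra F G | ∀ g ∈ p.coeff.support, g ∈ N})) →
          (∑ i, α i * φ (MonoidAlgebra.of F G (h i))) = 0 →
          ∀ i, α i = 0

/-- Strong Hughes-freeness: the directness condition holds for every subgroup `H ≤ G`
and every normal subgroup `N ⊴ H`, with no finite-generation or `H/N ≅ ℤ` assumption. -/
def IsStronglyHughesFree {F G D : Type*} [DivisionRing F] [Group G] [DivisionRing D]
    (φ : MonoidAlgebra F G →+* D) : Prop :=
  ∀ H N : Subgroup G, N ≤ H →
    (∀ h ∈ H, ∀ n ∈ N, h * n * h⁻¹ ∈ N) →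
    ∀ (n : ℕ) (h : Fin n → G), (∀ i, h i ∈ H) →
      (∀ i j, i ≠ j → (h i)⁻¹ * h j ∉ N) →
      ∀ α : Fin n → D,
        (∀ i, α i ∈ divClosure
          (φ '' {p : MonoidAlgebra F G | ∀ g ∈ p.coeff.support, g ∈ N})) →
        (∑ i, α i * φ (MonoidAlgebra.of F G (h i))) = 0 →
        ∀ i, α i = 0

set_option linter.unusedSectionVars false

section Aux
variable {F G D : Type*} [DivisionRing F] [Group G] [DivisionRing D]

theorem mem_divClosure_of_mem {s : Set D} {x : D} (hx : x ∈ s) : x ∈ divClosure s :=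
  Subring.mem_sInf.2 fun _ hS => hS.1 hx

theorem inv_mem_divClosure {s : Set D} {x : D} (hx : x ∈ divClosure s) :
    x⁻¹ ∈ divClosure s :=
  Subring.mem_sInf.2 fun S hS => hS.2 x (Subring.mem_sInf.1 hx S hS)

theorem divClosure_le {s : Set D} {S : Subring D} (h1 : s ⊆ S)
    (h2 : ∀ x ∈ S, x⁻¹ ∈ S) : divClosure s ≤ S := sInf_le ⟨h1, h2⟩

/-- Conjugation by a unit as a ring hom. -/
def conjHom (a b : D) (hab : a * b = 1) (hba : b * a = 1) : D →+* D where
  toFun x := a * x * b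
  map_one' := by show a * 1 * b = 1; rw [mul_one, hab]
  map_mul' x y := by
    show a * (x * y) * b = a * x * b * (a * y * b)
    simp only [mul_assoc]
    rw [← mul_assoc b a, hba, one_mul]
  map_zero' := by show a * 0 * b = 0; simp
  map_add' x y := by
    show a * (x + y) * b = a * x * b + a * y * b
    rw [mul_add, add_mul]

variable (φ : MonoidAlgebra F G →+* D) (N : Subgroup G) [N.Normal]

theorem of_mem_DN {g : G} (hg : g ∈ N) :
    φ (MonoidAlgebra.of F G g) ∈
      divClosure (φ '' {p : MonoidAlgebra F G | ∀ g ∈ p.coeff.support, g ∈ N}) := by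
  refine mem_divClosure_of_mem ⟨MonoidAlgebra.of F G g, fun k hk => ?_, rfl⟩
  rw [MonoidAlgebra.of_apply] at hk
  have := Finsupp.support_single_subset hk
  simp only [Finset.mem_singleton] at this
  rwa [this]

theorem single_mem_DN {g : G} (hg : g ∈ N) (c : F) :
    φ (MonoidAlgebra.single g c) ∈
      divClosure (φ '' {p : MonoidAlgebra F G | ∀ g ∈ p.coeff.support, g ∈ N}) := by
  refine mem_divClosure_of_mem ⟨MonoidAlgebra.single g c, fun k hk => ?_, rfl⟩
  have := Finsupp.support_single_subset hk
  simp only [Finset.mem_singleton] at this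
  rwa [this]

theorem conj_mem_DN (g : G) {x : D}
    (hx : x ∈ divClosure (φ '' {p : MonoidAlgebra F G | ∀ g ∈ p.coeff.support, g ∈ N})) :
    φ (MonoidAlgebra.of F G g) * x * φ (MonoidAlgebra.of F G g⁻¹) ∈
      divClosure (φ '' {p : MonoidAlgebra F G | ∀ g ∈ p.coeff.support, g ∈ N}) := by
  classical
  have hab : φ (MonoidAlgebra.of F G g) * φ (MonoidAlgebra.of F G g⁻¹) = 1 := by
    rw [← map_mul, ← map_mul, mul_inv_cancel, map_one, map_one]
  have hba : φ (MonoidAlgebra.of F G g⁻¹) * φ (MonoidAlgebra.of F G g) = 1 := by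
    rw [← map_mul, ← map_mul, inv_mul_cancel, map_one, map_one]
  set ψ : D →+* D := conjHom (φ (MonoidAlgebra.of F G g)) (φ (MonoidAlgebra.of F G g⁻¹)) hab hba
  have key : divClosure (φ '' {p : MonoidAlgebra F G | ∀ g ∈ p.coeff.support, g ∈ N}) ≤
      (divClosure (φ '' {p : MonoidAlgebra F G | ∀ g ∈ p.coeff.support, g ∈ N})).comap ψ := by
    refine divClosure_le ?_ ?_
    · rintro _ ⟨p, hp, rfl⟩
      refine Subring.mem_comap.2 ?_
      have hψ : ψ (φ p) = φ (MonoidAlgebra.of F G g * p * MonoidAlgebra.of F G g⁻¹) := by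
        rw [map_mul, map_mul]; rfl
      rw [hψ]
      refine mem_divClosure_of_mem
        ⟨MonoidAlgebra.of F G g * p * MonoidAlgebra.of F G g⁻¹, fun k hk => ?_, rfl⟩
      have h1 := MonoidAlgebra.support_coeff_mul_subset (MonoidAlgebra.of F G g * p) (MonoidAlgebra.of F G g⁻¹) hk
      rw [Finset.mem_mul] at h1
      obtain ⟨u, hu, v, hv, huv⟩ := h1
      have h2 := MonoidAlgebra.support_coeff_mul_subset (MonoidAlgebra.of F G g) p hu
      rw [Finset.mem_mul] at h2
      obtain ⟨w, hw, x, hxs, hwx⟩ := h2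
      rw [MonoidAlgebra.of_apply] at hw hv
      have hwg : w = g := by
        have := Finsupp.support_single_subset hw
        simpa using this
      have hvg : v = g⁻¹ := by
        have := Finsupp.support_single_subset hv
        simpa using this
      have hxN : x ∈ N := hp x hxs
      have hk : k = g * x * g⁻¹ := by rw [← huv, ← hwx, hwg, hvg]
      rw [hk]
      exact Subgroup.Normal.conj_mem ‹N.Normal› x hxN g
    · intro x hx
      refine Subring.mem_comap.2 ?_
      rw [map_inv₀ ψ]
      exact inv_mem_divClosure (Subring.mem_comap.1 hx)
  exact Subring.mem_comap.1 (key hx)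

variable (t : G ⧸ N → G) (ht : ∀ q : G ⧸ N, (QuotientGroup.mk (t q) : G ⧸ N) = q)

include ht in
theorem key_mul (q q' : G ⧸ N) {α β : D}
    (hα : α ∈ divClosure (φ '' {p : MonoidAlgebra F G | ∀ g ∈ p.coeff.support, g ∈ N}))
    (hβ : β ∈ divClosure (φ '' {p : MonoidAlgebra F G | ∀ g ∈ p.coeff.support, g ∈ N})) :
    ∃ γ ∈ divClosure (φ '' {p : MonoidAlgebra F G | ∀ g ∈ p.coeff.support, g ∈ N}),
      (α * φ (MonoidAlgebra.of F G (t q))) * (β * φ (MonoidAlgebra.of F G (t q'))) =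
        γ * φ (MonoidAlgebra.of F G (t (q * q'))) := by
  set n' : G := t q * t q' * (t (q * q'))⁻¹ with hn'def
  have hn' : n' ∈ N := by
    rw [← QuotientGroup.eq_one_iff]
    have : (↑(t q * t q' * (t (q * q'))⁻¹) : G ⧸ N) =
        ↑(t q) * ↑(t q') * (↑(t (q * q')))⁻¹ := by
      rw [QuotientGroup.mk_mul, QuotientGroup.mk_mul, QuotientGroup.mk_inv]
    rw [hn'def, this, ht, ht, ht, mul_inv_cancel]
  refine ⟨α * (φ (MonoidAlgebra.of F G (t q)) * β * φ (MonoidAlgebra.of F G (t q)⁻¹)) *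
      φ (MonoidAlgebra.of F G n'), mul_mem (mul_mem hα (conj_mem_DN φ N (t q) hβ))
      (of_mem_DN φ N hn'), ?_⟩
  have h1 : φ (MonoidAlgebra.of F G n') * φ (MonoidAlgebra.of F G (t (q * q'))) =
      φ (MonoidAlgebra.of F G (t q)) * φ (MonoidAlgebra.of F G (t q')) := by
    rw [← map_mul, ← map_mul, ← map_mul, ← map_mul, hn'def, inv_mul_cancel_right]
  have h2 : φ (MonoidAlgebra.of F G (t q)⁻¹) * φ (MonoidAlgebra.of F G (t q)) = 1 := by
    rw [← map_mul, ← map_mul, inv_mul_cancel, map_one, map_one]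
  simp only [mul_assoc]
  rw [h1, ← mul_assoc (φ (MonoidAlgebra.of F G (t q)⁻¹)), h2, one_mul]

/-- The decomposition map. -/
noncomputable def Phi : ((G ⧸ N) →₀
    ↥(divClosure (φ '' {p : MonoidAlgebra F G | ∀ g ∈ p.coeff.support, g ∈ N}))) →+ D where
  toFun c := c.sum fun q α => (α : D) * φ (MonoidAlgebra.of F G (t q))
  map_zero' := Finsupp.sum_zero_index
  map_add' c c' := by
    show (c + c').sum (fun q α => (α : D) * φ (MonoidAlgebra.of F G (t q))) =
      c.sum (fun q α => (α : D) * φ (MonoidAlgebra.of F G (t q))) +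
      c'.sum (fun q α => (α : D) * φ (MonoidAlgebra.of F G (t q)))
    exact Finsupp.sum_add_index' (fun q => by simp) (fun q a b => by push_cast; rw [add_mul])

theorem Phi_single (q : G ⧸ N)
    (γ : ↥(divClosure (φ '' {p : MonoidAlgebra F G | ∀ g ∈ p.coeff.support, g ∈ N}))) :
    Phi φ N t (Finsupp.single q γ) = (γ : D) * φ (MonoidAlgebra.of F G (t q)) := by
  show (Finsupp.single q γ).sum (fun q α => (α : D) * φ (MonoidAlgebra.of F G (t q))) = _
  exact Finsupp.sum_single_index (by simp)

include ht in
theorem Phi_eq_zero (hc : ∀ H : Subgroup G, ∀ NN : Subgroup G, NN ≤ H →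
      (∀ h ∈ H, ∀ n ∈ NN, h * n * h⁻¹ ∈ NN) →
      ∀ (n : ℕ) (h : Fin n → G), (∀ i, h i ∈ H) →
        (∀ i j, i ≠ j → (h i)⁻¹ * h j ∉ NN) →
        ∀ α : Fin n → D,
          (∀ i, α i ∈ divClosure
            (φ '' {p : MonoidAlgebra F G | ∀ g ∈ p.coeff.support, g ∈ NN})) →
          (∑ i, α i * φ (MonoidAlgebra.of F G (h i))) = 0 → ∀ i, α i = 0)
    (c : (G ⧸ N) →₀ ↥(divClosure (φ '' {p : MonoidAlgebra F G | ∀ g ∈ p.coeff.support, g ∈ N})))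
    (h0 : Phi φ N t c = 0) : c = 0 := by
  classical
  have hdist : ∀ i j : Fin c.support.card, i ≠ j →
      (t ((c.support.equivFin.symm i : G ⧸ N)))⁻¹ * t ((c.support.equivFin.symm j : G ⧸ N)) ∉ N := by
    intro i j hij hmem
    apply hij
    have h1 : ((c.support.equivFin.symm i : G ⧸ N)) = ((c.support.equivFin.symm j : G ⧸ N)) := by
      rw [← ht ((c.support.equivFin.symm i : G ⧸ N)), ← ht ((c.support.equivFin.symm j : G ⧸ N)),
        QuotientGroup.eq]
      exact hmem
    exact c.support.equivFin.symm.injective (Subtype.ext h1)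
  have hsum : (∑ i : Fin c.support.card,
      ((c ((c.support.equivFin.symm i : G ⧸ N)) : D) *
        φ (MonoidAlgebra.of F G (t ((c.support.equivFin.symm i : G ⧸ N)))))) = 0 := by
    rw [Equiv.sum_comp c.support.equivFin.symm
      (fun x : {x // x ∈ c.support} => (c (x : G ⧸ N) : D) *
        φ (MonoidAlgebra.of F G (t (x : G ⧸ N)))),
      Finset.sum_coe_sort c.support
      (fun x => (c x : D) * φ (MonoidAlgebra.of F G (t x)))]
    exact h0
  have hzero := hc ⊤ N le_top
    (fun g _ n hn => Subgroup.Normal.conj_mem ‹N.Normal› n hn g)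
    c.support.card (fun i => t ((c.support.equivFin.symm i : G ⧸ N))) (fun _ => trivial)
    hdist (fun i => ((c ((c.support.equivFin.symm i : G ⧸ N)) : D)))
    (fun i => (c _).2) hsum
  ext q
  by_contra hq
  have hqs : q ∈ c.support := Finsupp.mem_support_iff.2 (by
    intro hh
    apply hq
    rw [hh]; rfl)
  have h3 : (c ((c.support.equivFin.symm (c.support.equivFin ⟨q, hqs⟩)) : G ⧸ N) : D) = 0 :=
    hzero (c.support.equivFin ⟨q, hqs⟩)
  rw [Equiv.symm_apply_apply] at h3
  apply hq
  simpa using h3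

end Aux

/-- Let `G` be a locally indicable group with (strongly) Hughes-free division ring
`D_FG` and `N ⊴ G` a normal subgroup.  Then the subring `R` of `D_FG` generated by
`D_FN` and the image of `FG` is a crossed product `D_FN * (G/N)`: with respect to any
transversal `t : G/N → G` of `N` in `G`, every element of `R` is uniquely a finite sum
`∑ α_q φ(t(q))` with `α_q ∈ D_FN`, the graded pieces multiply into each other
(`D_FN φ(t q) · D_FN φ(t q') ⊆ D_FN φ(t (qq'))`), and each graded piece contains a
unit of `R`. -/
theorem crossed_product_decomposition
    {F G D : Type*} [DivisionRing F] [Group G] [DivisionRing D]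
    (φ : MonoidAlgebra F G →+* D)
    (hLI : LocallyIndicable G) (hHF : IsHughesFree φ)
    (hStrong : IsStronglyHughesFree φ)
    (N : Subgroup G) [N.Normal]
    (t : G ⧸ N → G) (ht : ∀ q : G ⧸ N, (QuotientGroup.mk (t q) : G ⧸ N) = q) :
    let DN := divClosure (φ '' {p : MonoidAlgebra F G | ∀ g ∈ p.coeff.support, g ∈ N})
    let R₀ := Subring.closure ((DN : Subring D) ∪ Set.range φ)
    (∀ r ∈ R₀, ∃! c : (G ⧸ N) →₀ ↥DN,
        r = c.sum fun q α => (α : D) * φ (MonoidAlgebra.of F G (t q))) ∧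
    (∀ q q' : G ⧸ N, ∀ α ∈ DN, ∀ β ∈ DN, ∃ γ ∈ DN,
        (α * φ (MonoidAlgebra.of F G (t q))) * (β * φ (MonoidAlgebra.of F G (t q'))) =
          γ * φ (MonoidAlgebra.of F G (t (q * q')))) ∧
    (∀ q : G ⧸ N, φ (MonoidAlgebra.of F G (t q)) ∈ R₀ ∧
      ∃ u : D, u ∈ R₀ ∧ φ (MonoidAlgebra.of F G (t q)) * u = 1 ∧
        u * φ (MonoidAlgebra.of F G (t q)) = 1) := by
  intro DN R₀
  classical
  refine ⟨?_, ?_, ?_⟩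
  · -- part 1: unique decomposition
    intro r hr
    have hDNmem : ∀ x ∈ DN, x ∈ (Phi φ N t).range := by
      intro x hx
      have ht1 : (t (1 : G ⧸ N))⁻¹ ∈ N :=
        inv_mem ((QuotientGroup.eq_one_iff (t 1)).1 (ht 1))
      refine AddMonoidHom.mem_range.2
        ⟨Finsupp.single 1 ⟨x * φ (MonoidAlgebra.of F G (t 1)⁻¹),
          mul_mem hx (of_mem_DN φ N ht1)⟩, ?_⟩
      rw [Phi_single]
      show x * φ (MonoidAlgebra.of F G (t 1)⁻¹) * φ (MonoidAlgebra.of F G (t 1)) = x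
      rw [mul_assoc, ← map_mul, ← map_mul, inv_mul_cancel, map_one, map_one, mul_one]
    have hsingle : ∀ (g : G) (cF : F),
        φ (MonoidAlgebra.single g cF) ∈ (Phi φ N t).range := by
      intro g cF
      have hn : g * (t ((g : G ⧸ N)))⁻¹ ∈ N := by
        rw [← QuotientGroup.eq_one_iff, QuotientGroup.mk_mul, QuotientGroup.mk_inv, ht]
        exact mul_inv_cancel _
      refine AddMonoidHom.mem_range.2
        ⟨Finsupp.single ((g : G ⧸ N))
          ⟨φ (MonoidAlgebra.single (g * (t ((g : G ⧸ N)))⁻¹) cF),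
            single_mem_DN φ N hn cF⟩, ?_⟩
      rw [Phi_single]
      show φ (MonoidAlgebra.single (g * (t ((g : G ⧸ N)))⁻¹) cF) *
          φ (MonoidAlgebra.of F G (t ((g : G ⧸ N)))) = φ (MonoidAlgebra.single g cF)
      rw [← map_mul, MonoidAlgebra.of_apply, MonoidAlgebra.single_mul_single,
        inv_mul_cancel_right, mul_one]
    have hex : r ∈ (Phi φ N t).range := by
      refine Subring.closure_induction
        (p := fun x _ => x ∈ (Phi φ N t).range) ?_ ?_ ?_ ?_ ?_ ?_ hr
      · rintro x (hx | ⟨p, rfl⟩)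
        · exact hDNmem x hx
        · have hp : φ p = ∑ g ∈ p.coeff.support, φ (MonoidAlgebra.single g (p.coeff g)) := by
            conv_lhs => rw [← MonoidAlgebra.sum_coeff_single p]
            rw [map_finsuppSum]
            rfl
          rw [hp]
          exact AddSubgroup.sum_mem _ fun g _ => hsingle g (p.coeff g)
      · exact zero_mem _
      · exact hDNmem 1 (one_mem DN)
      · intro x y _ _ hx hy
        exact add_mem hx hy
      · intro x _ hx
        exact neg_mem hx
      · intro a b _ _ ha hb
        obtain ⟨c, rfl⟩ := AddMonoidHom.mem_range.1 ha
        obtain ⟨c', rfl⟩ := AddMonoidHom.mem_range.1 hb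
        have h1 : Phi φ N t c * Phi φ N t c' =
            ∑ q ∈ c.support,
              (c q : D) * φ (MonoidAlgebra.of F G (t q)) * Phi φ N t c' := by
          rw [show Phi φ N t c =
              c.sum (fun q α => (α : D) * φ (MonoidAlgebra.of F G (t q))) from rfl,
            Finsupp.sum_mul]
          rfl
        rw [h1]
        refine AddSubgroup.sum_mem _ fun q _ => ?_
        have h2 : (c q : D) * φ (MonoidAlgebra.of F G (t q)) * Phi φ N t c' =
            ∑ q' ∈ c'.support, (c q : D) * φ (MonoidAlgebra.of F G (t q)) *
              ((c' q' : D) * φ (MonoidAlgebra.of F G (t q'))) := by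
          rw [show Phi φ N t c' =
              c'.sum (fun q α => (α : D) * φ (MonoidAlgebra.of F G (t q))) from rfl,
            Finsupp.mul_sum]
          rfl
        rw [h2]
        refine AddSubgroup.sum_mem _ fun q' _ => ?_
        obtain ⟨γ, hγ, heq⟩ := key_mul φ N t ht q q' (c q).2 (c' q').2
        rw [heq]
        exact AddMonoidHom.mem_range.2 ⟨Finsupp.single (q * q') ⟨γ, hγ⟩, Phi_single φ N t _ _⟩
    obtain ⟨c, hc⟩ := AddMonoidHom.mem_range.1 hex
    refine ⟨c, hc.symm, fun y hy => ?_⟩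
    have hsub : Phi φ N t (y - c) = 0 := by
      rw [map_sub]
      have hyy : Phi φ N t y = r := hy.symm
      rw [hyy, hc, sub_self]
    have := Phi_eq_zero φ N t ht hStrong (y - c) hsub
    exact sub_eq_zero.1 this
  · -- part 2: graded multiplication
    intro q q' α hα β hβ
    exact key_mul φ N t ht q q' hα hβ
  · -- part 3: units in each graded piece
    intro q
    refine ⟨Subring.subset_closure (Or.inr ⟨MonoidAlgebra.of F G (t q), rfl⟩),
      φ (MonoidAlgebra.of F G (t q)⁻¹),
      Subring.subset_closure (Or.inr ⟨MonoidAlgebra.of F G (t q)⁻¹, rfl⟩), ?_, ?_⟩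
    · rw [← map_mul, ← map_mul, mul_inv_cancel, map_one, map_one]
    · rw [← map_mul, ← map_mul, inv_mul_cancel, map_one, map_one]
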